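/- Let s : {1,…,p} × {1,…,p} → ℝ be a similarity matrix, and for 1 ≤ r ≤ p and 1 ≤ l ≤ p define the forward pencil P(r,l) = ∑_{1≤a,b≤r, |a−b|<l} s(a,b) and the backward pencil P̄(r,l) = ∑_{r≤a,b≤p, |a−b|<l} s(a,b). Then for all 1 ≤ i ≤ j ≤ p and every l with 1 ≤ l ≤ j − i + 1, P(j,l) + P̄(i,l) − P(p,l) = ∑_{i≤a,b≤j, |a−b|<l} s(a,b). -/

import Mathlib

open Finset

/-- The forward pencil `P(r,l) = ∑_{1≤a,b≤r, |a−b|<l} s(a,b)`. -/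
def pencilF (s : ℕ → ℕ → ℝ) (r l : ℕ) : ℝ :=
  ∑ a ∈ Finset.Icc 1 r, ∑ b ∈ Finset.Icc 1 r,
    if |(a : ℤ) - (b : ℤ)| < (l : ℤ) then s a b else 0

/-- The backward pencil `P̄(r,l) = ∑_{r≤a,b≤p, |a−b|<l} s(a,b)`. -/
def pencilB (s : ℕ → ℕ → ℝ) (p r l : ℕ) : ℝ :=
  ∑ a ∈ Finset.Icc r p, ∑ b ∈ Finset.Icc r p,
    if |(a : ℤ) - (b : ℤ)| < (l : ℤ) then s a b else 0

/-- For `1 ≤ i ≤ j ≤ p` and `1 ≤ l ≤ j − i + 1`,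
`P(j,l) + P̄(i,l) − P(p,l) = ∑_{i≤a,b≤j, |a−b|<l} s(a,b)`. -/


lemma pencil_key (s : ℕ → ℕ → ℝ) (p l u v : ℕ) (hu : 1 ≤ u) (hv : v ≤ p) :
    (∑ a ∈ Finset.Icc u v, ∑ b ∈ Finset.Icc u v,
      if |(a : ℤ) - (b : ℤ)| < (l : ℤ) then s a b else 0)
    = ∑ a ∈ Finset.Icc 1 p, ∑ b ∈ Finset.Icc 1 p,
        if u ≤ a ∧ a ≤ v ∧ u ≤ b ∧ b ≤ v ∧ |(a : ℤ) - (b : ℤ)| < (l : ℤ) then s a b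
        else 0 := by
  rw [← Finset.sum_subset (Finset.Icc_subset_Icc hu hv)]
  · apply Finset.sum_congr rfl
    intro a ha
    simp only [Finset.mem_Icc] at ha
    rw [← Finset.sum_subset (Finset.Icc_subset_Icc hu hv)]
    · apply Finset.sum_congr rfl
      intro b hb
      simp only [Finset.mem_Icc] at hb
      simp [ha.1, ha.2, hb.1, hb.2]
    · intro b _ hb'
      simp only [Finset.mem_Icc] at hb'
      have : ¬(u ≤ a ∧ a ≤ v ∧ u ≤ b ∧ b ≤ v ∧ |(a : ℤ) - (b : ℤ)| < (l : ℤ)) := by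
        intro h; exact hb' ⟨h.2.2.1, h.2.2.2.1⟩
      simp [this]
  · intro a _ ha'
    simp only [Finset.mem_Icc] at ha'
    apply Finset.sum_eq_zero
    intro b _
    have : ¬(u ≤ a ∧ a ≤ v ∧ u ≤ b ∧ b ≤ v ∧ |(a : ℤ) - (b : ℤ)| < (l : ℤ)) := by
      intro h; exact ha' ⟨h.1, h.2.1⟩
    simp [this]

theorem pencil_inclusion_exclusion (s : ℕ → ℕ → ℝ) (p i j l : ℕ)
    (hi : 1 ≤ i) (hij : i ≤ j) (hjp : j ≤ p) (hl1 : 1 ≤ l) (hl : l ≤ j - i + 1) :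
    pencilF s j l + pencilB s p i l - pencilF s p l =
      ∑ a ∈ Finset.Icc i j, ∑ b ∈ Finset.Icc i j,
        if |(a : ℤ) - (b : ℤ)| < (l : ℤ) then s a b else 0 := by
  rw [pencilF, pencilB, pencilF,
    pencil_key s p l 1 j le_rfl hjp,
    pencil_key s p l i p hi le_rfl,
    pencil_key s p l 1 p le_rfl le_rfl,
    pencil_key s p l i j hi hjp]
  rw [← Finset.sum_add_distrib, ← Finset.sum_sub_distrib]
  apply Finset.sum_congr rfl
  intro a ha
  rw [← Finset.sum_add_distrib, ← Finset.sum_sub_distrib]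
  apply Finset.sum_congr rfl
  intro b hb
  simp only [Finset.mem_Icc] at ha hb
  simp only [abs_lt]
  split_ifs <;> (try ring1) <;> (exfalso; omega)
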